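/- arXiv:2509.05252 — 2 statements merged into one kernel-verified Lean document; each statement's English description precedes it below -/
import Mathlib

section
/- Let 1 < q < ∞. There is a constant C such that for every family (g_j)_{j∈ℤ} of non-negative measurable functions on (0,∞), ‖ sup_{j∈ℤ} ∫_s^∞ 4^j e^{−4^j(t−s)} g_j(t) dt ‖_{L^q_s(0,∞)} ≤ C ‖ sup_{j∈ℤ} g_j ‖_{L^q(0,∞)}, where the L^q norms are taken with respect to the variable s ∈ (0,∞). -/
open MeasureTheory Filter ENNReal

noncomputable section

namespace SupExpAux
open Set Metric


/-- uncentered Hardy-Littlewood maximal function (over open intervals), ℝ≥0∞-valued. -/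
def MB (f : ℝ → ℝ≥0∞) (x : ℝ) : ℝ≥0∞ :=
  ⨆ (a : ℝ) (b : ℝ) (_ : a < x ∧ x < b),
    (ENNReal.ofReal (b - a))⁻¹ * ∫⁻ t in Set.Ioo a b, f t

lemma avg_le_MB (f : ℝ → ℝ≥0∞) {a b x : ℝ} (ha : a < x) (hb : x < b) :
    (ENNReal.ofReal (b - a))⁻¹ * ∫⁻ t in Set.Ioo a b, f t ≤ MB f x := by
  refine le_trans ?_ (le_iSup _ a)
  refine le_trans ?_ (le_iSup _ b)
  exact le_iSup_of_le ⟨ha, hb⟩ le_rfl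

lemma lintegral_Ioo_le_MB (f : ℝ → ℝ≥0∞) {a b x : ℝ} (ha : a < x) (hb : x < b) :
    ∫⁻ t in Set.Ioo a b, f t ≤ ENNReal.ofReal (b - a) * MB f x := by
  have hab : (0:ℝ) < b - a := by linarith
  have h0 : ENNReal.ofReal (b - a) ≠ 0 := by
    simp [ENNReal.ofReal_eq_zero]; linarith
  have htop : ENNReal.ofReal (b - a) ≠ ∞ := ENNReal.ofReal_ne_top
  calc ∫⁻ t in Set.Ioo a b, f t
      = ENNReal.ofReal (b - a) * ((ENNReal.ofReal (b - a))⁻¹ * ∫⁻ t in Set.Ioo a b, f t) := by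
        rw [← mul_assoc, ENNReal.mul_inv_cancel h0 htop, one_mul]
    _ ≤ ENNReal.ofReal (b - a) * MB f x := by
        exact mul_le_mul_right (avg_le_MB f ha hb) _

lemma MB_measurable (f : ℝ → ℝ≥0∞) : Measurable (MB f) := by
  have : LowerSemicontinuous (MB f) := by
    have : MB f = fun x => ⨆ (a : ℝ) (b : ℝ),
        Set.indicator (Set.Ioo a b)
          (fun _ => (ENNReal.ofReal (b - a))⁻¹ * ∫⁻ t in Set.Ioo a b, f t) x := by
      funext x
      unfold MB
      congr 1; ext a; congr 1; ext b
      by_cases h : a < x ∧ x < b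
      · rw [Set.indicator_of_mem (by exact ⟨h.1, h.2⟩), iSup_pos h]
      · rw [Set.indicator_of_notMem (by simpa [Set.mem_Ioo] using h), iSup_neg h]; rfl
    rw [this]
    exact lowerSemicontinuous_iSup fun a => lowerSemicontinuous_iSup fun b =>
      (isOpen_Ioo).lowerSemicontinuous_indicator (by simp)
  exact this.measurable



lemma MB_weak (f : ℝ → ℝ≥0∞) {ε : ℝ≥0∞} (h0 : ε ≠ 0) (htop : ε ≠ ∞) :
    volume {x | ε < MB f x} ≤ 8 * ε⁻¹ * ∫⁻ y, f y := by
  by_cases hI : ∫⁻ y, f y = ∞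
  · rw [hI, ENNReal.mul_top]
    · exact le_top
    · exact mul_ne_zero (by norm_num) (ENNReal.inv_ne_zero.2 htop)
  set E := {x | ε < MB f x} with hE
  have key : ∀ x ∈ E, ∃ r : ℝ, 0 < r ∧ ε * ENNReal.ofReal r ≤ ∫⁻ t in closedBall x r, f t := by
    intro x hx
    simp only [hE, Set.mem_setOf_eq, MB, lt_iSup_iff] at hx
    obtain ⟨a, b, ⟨ha, hb⟩, hlt⟩ := hx
    have hab : (0:ℝ) < b - a := by linarith
    have hd0 : ENNReal.ofReal (b - a) ≠ 0 := by simp [ENNReal.ofReal_eq_zero]; linarith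
    have hdt : ENNReal.ofReal (b - a) ≠ ∞ := ENNReal.ofReal_ne_top
    refine ⟨b - a, hab, ?_⟩
    have h1 : ε * ENNReal.ofReal (b - a) ≤ ∫⁻ t in Set.Ioo a b, f t := by
      have h2 := mul_le_mul_left hlt.le (ENNReal.ofReal (b - a))
      calc ε * ENNReal.ofReal (b - a) ≤
          (ENNReal.ofReal (b - a))⁻¹ * (∫⁻ t in Set.Ioo a b, f t) * ENNReal.ofReal (b - a) := h2
        _ = ∫⁻ t in Set.Ioo a b, f t := by
            rw [mul_right_comm, ENNReal.inv_mul_cancel hd0 hdt, one_mul]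
    refine h1.trans (lintegral_mono_set ?_)
    intro y hy
    simp only [Set.mem_Ioo] at hy
    simp only [mem_closedBall, Real.dist_eq, abs_le]
    constructor <;> linarith
  classical
  set r : ℝ → ℝ := fun x => if hx : x ∈ E then (key x hx).choose else 1 with hr
  have hrpos : ∀ x ∈ E, 0 < r x := by
    intro x hx; rw [hr]; simp only [dif_pos hx]; exact (key x hx).choose_spec.1
  have hrint : ∀ x ∈ E, ε * ENNReal.ofReal (r x) ≤ ∫⁻ t in closedBall x (r x), f t := by
    intro x hx; rw [hr]; simp only [dif_pos hx]; exact (key x hx).choose_spec.2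
  have hrof : ∀ x ∈ E, ENNReal.ofReal (r x) ≤ ε⁻¹ * ∫⁻ y, f y := by
    intro x hx
    calc ENNReal.ofReal (r x) = ε⁻¹ * (ε * ENNReal.ofReal (r x)) := by
          rw [← mul_assoc, ENNReal.inv_mul_cancel h0 htop, one_mul]
      _ ≤ ε⁻¹ * ∫⁻ y, f y :=
          mul_le_mul_right ((hrint x hx).trans (setLIntegral_le_lintegral _ _)) _
  have hRtop : ε⁻¹ * ∫⁻ y, f y ≠ ∞ :=
    ENNReal.mul_ne_top (ENNReal.inv_ne_top.2 h0) hI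
  have hrR : ∀ x ∈ E, r x ≤ (ε⁻¹ * ∫⁻ y, f y).toReal := by
    intro x hx
    exact (ENNReal.ofReal_le_iff_le_toReal hRtop).1 (hrof x hx)
  obtain ⟨u, hu_sub, hu_disj, hu_cov⟩ :=
    Vitali.exists_disjoint_subfamily_covering_enlargement_closedBall E id r
      ((ε⁻¹ * ∫⁻ y, f y).toReal) hrR 4 (by norm_num)
  have hu_count : u.Countable := by
    apply hu_disj.countable_of_nonempty_interior
    intro b hb
    exact ⟨b, ball_subset_interior_closedBall (mem_ball_self (hrpos b (hu_sub hb)))⟩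
  have hcov : E ⊆ ⋃ b ∈ u, closedBall b (4 * r b) := by
    intro x hx
    obtain ⟨b, hbu, hsub⟩ := hu_cov x hx
    exact Set.mem_biUnion hbu (hsub (mem_closedBall_self (hrpos x hx).le))
  calc volume E ≤ volume (⋃ b ∈ u, closedBall b (4 * r b)) := measure_mono hcov
    _ ≤ ∑' b : u, volume (closedBall (b : ℝ) (4 * r b)) := measure_biUnion_le _ hu_count _
    _ = ∑' b : u, 8 * ENNReal.ofReal (r b) := by
        congr 1; funext b
        rw [Real.volume_closedBall]
        rw [show (2 : ℝ) * (4 * r b) = 8 * r b by ring,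
          ENNReal.ofReal_mul (by norm_num : (0:ℝ) ≤ 8)]
        norm_num
    _ ≤ ∑' b : u, 8 * (ε⁻¹ * ∫⁻ t in closedBall (b : ℝ) (r b), f t) := by
        refine ENNReal.tsum_le_tsum fun b => mul_le_mul_right ?_ _
        have hb := hrint b (hu_sub b.2)
        calc ENNReal.ofReal (r (b:ℝ)) = ε⁻¹ * (ε * ENNReal.ofReal (r (b:ℝ))) := by
              rw [← mul_assoc, ENNReal.inv_mul_cancel h0 htop, one_mul]
          _ ≤ ε⁻¹ * ∫⁻ t in closedBall (b : ℝ) (r b), f t := mul_le_mul_right hb _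
    _ = 8 * ε⁻¹ * ∑' b : u, ∫⁻ t in closedBall (b : ℝ) (r b), f t := by
        rw [mul_assoc, ← ENNReal.tsum_mul_left, ← ENNReal.tsum_mul_left]
    _ ≤ 8 * ε⁻¹ * ∫⁻ y, f y := by
        refine mul_le_mul_right ?_ _
        have h1 : ∀ b : ℝ, (∫⁻ t in closedBall b (r b), f t)
            = (volume.withDensity f) (closedBall b (r b)) := by
          intro b; rw [withDensity_apply f measurableSet_closedBall]
        calc ∑' b : u, ∫⁻ t in closedBall (b : ℝ) (r b), f t
            = ∑' b : u, (volume.withDensity f) (closedBall (b : ℝ) (r b)) := by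
              congr 1; funext b; exact h1 b
          _ = (volume.withDensity f) (⋃ b ∈ u, closedBall b (r b)) :=
              (measure_biUnion hu_count hu_disj fun b _ => measurableSet_closedBall).symm
          _ ≤ (volume.withDensity f) Set.univ := measure_mono (Set.subset_univ _)
          _ = ∫⁻ y, f y := by rw [← setLIntegral_univ, withDensity_apply f MeasurableSet.univ]


lemma lint_rpow_Ioo {p : ℝ} (hp : 0 < p) {b : ℝ} (hb : 0 < b) :
    ∫⁻ c in Set.Ioo (0:ℝ) b, ENNReal.ofReal (c ^ (p-1)) = ENNReal.ofReal (b ^ p / p) := by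
  rw [Measure.restrict_congr_set Ioo_ae_eq_Ioc]
  have hint : IntegrableOn (fun c : ℝ => c ^ (p-1)) (Set.Ioc 0 b) volume := by
    have := (intervalIntegral.intervalIntegrable_rpow' (show (-1:ℝ) < p - 1 by linarith)
      (a := 0) (b := b)).1
    exact this
  have hnn : 0 ≤ᵐ[volume.restrict (Set.Ioc 0 b)] fun c : ℝ => c ^ (p-1) := by
    filter_upwards [ae_restrict_mem measurableSet_Ioc] with c hc
    exact Real.rpow_nonneg hc.1.le _
  rw [← ofReal_integral_eq_lintegral_ofReal hint hnn]
  congr 1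
  rw [← intervalIntegral.integral_of_le hb.le,
    integral_rpow (Or.inl (show (-1:ℝ) < p - 1 by linarith))]
  rw [sub_add_cancel, Real.zero_rpow hp.ne']
  ring

lemma lint_rpow_Ioi {p : ℝ} (hp : 0 < p) :
    ∫⁻ c in Set.Ioi (0:ℝ), ENNReal.ofReal (c ^ (p-1)) = ∞ := by
  by_contra h
  have hfin : (∫⁻ c in Set.Ioi (0:ℝ), ENNReal.ofReal (c ^ (p-1))) < ∞ := lt_top_iff_ne_top.2 h
  have hle : ∀ n : ℕ, 0 < n → ENNReal.ofReal ((n:ℝ) ^ p / p)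
      ≤ ∫⁻ c in Set.Ioi (0:ℝ), ENNReal.ofReal (c ^ (p-1)) := by
    intro n hn
    rw [← lint_rpow_Ioo hp (show (0:ℝ) < n by exact_mod_cast hn)]
    exact lintegral_mono_set Set.Ioo_subset_Ioi_self
  have htend : Tendsto (fun n : ℕ => (n:ℝ) ^ p / p) atTop atTop := by
    exact ((tendsto_rpow_atTop hp).comp tendsto_natCast_atTop_atTop).atTop_div_const hp
  obtain ⟨n, hn, hn'⟩ := ((htend.eventually_gt_atTop
      ((∫⁻ c in Set.Ioi (0:ℝ), ENNReal.ofReal (c ^ (p-1))).toReal)).and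
      (eventually_gt_atTop 0)).exists
  have := hle n hn'
  rw [← ENNReal.ofReal_toReal hfin.ne] at this
  exact absurd (ENNReal.ofReal_le_ofReal_iff' .. |>.1 this) (by push_neg; constructor <;> [exact hn; positivity])


lemma scalar_main {p : ℝ} (hp : 0 < p) (T : ℝ≥0∞) :
    ∫⁻ c in Set.Ioi (0:ℝ),
        ENNReal.ofReal (c ^ (p-1)) * Set.indicator {c : ℝ | ENNReal.ofReal c < T} (fun _ => 1) c
      = ENNReal.ofReal p⁻¹ * T ^ p := by
  by_cases hT : T = ∞
  · subst hT
    have h1 : ∀ c : ℝ, Set.indicator {c : ℝ | ENNReal.ofReal c < ∞} (fun _ => (1:ℝ≥0∞)) c = 1 := by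
      intro c; rw [Set.indicator_of_mem]; simp [Set.mem_setOf_eq]
    simp only [h1, mul_one]
    rw [lint_rpow_Ioi hp, ENNReal.top_rpow_of_pos hp, ENNReal.mul_top]
    simp [ENNReal.ofReal_eq_zero]; positivity
  by_cases hT0 : T = 0
  · subst hT0
    have h1 : ∀ c : ℝ, Set.indicator {c : ℝ | ENNReal.ofReal c < 0} (fun _ => (1:ℝ≥0∞)) c = 0 := by
      intro c; rw [Set.indicator_of_notMem]; simp [Set.mem_setOf_eq]
    simp only [h1, mul_zero, lintegral_zero, ENNReal.zero_rpow_of_pos hp, mul_zero]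
  have hT' : 0 < T.toReal := ENNReal.toReal_pos hT0 hT
  have hcong : ∀ c ∈ Set.Ioi (0:ℝ),
      ENNReal.ofReal (c ^ (p-1)) * Set.indicator {c : ℝ | ENNReal.ofReal c < T} (fun _ => 1) c
        = Set.indicator (Set.Ioo 0 T.toReal) (fun c => ENNReal.ofReal (c ^ (p-1))) c := by
    intro c hc
    have hiff : ENNReal.ofReal c < T ↔ c < T.toReal :=
      ENNReal.ofReal_lt_iff_lt_toReal (le_of_lt hc) hT
    by_cases h : c < T.toReal
    · rw [Set.indicator_of_mem (by simpa [Set.mem_setOf_eq, hiff] using h),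
        Set.indicator_of_mem (by exact ⟨hc, h⟩), mul_one]
    · rw [Set.indicator_of_notMem (by simpa [Set.mem_setOf_eq, hiff] using h),
        Set.indicator_of_notMem (by simp [Set.mem_Ioo]; intro _; linarith [not_lt.1 h]), mul_zero]
  rw [setLIntegral_congr_fun measurableSet_Ioi hcong]
  rw [lintegral_indicator measurableSet_Ioo, Measure.restrict_restrict measurableSet_Ioo,
    Set.inter_eq_self_of_subset_left Set.Ioo_subset_Ioi_self, lint_rpow_Ioo hp hT']
  rw [← ENNReal.ofReal_toReal hT, ENNReal.ofReal_rpow_of_pos hT', ← ENNReal.ofReal_mul (by positivity)]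
  rw [ENNReal.ofReal_toReal hT]
  congr 1
  ring

lemma layercake (F : ℝ → ℝ≥0∞) (hF : Measurable F)
    {p : ℝ} (hp : 0 < p) :
    ∫⁻ x, (F x) ^ p
      = ENNReal.ofReal p * ∫⁻ c in Set.Ioi (0:ℝ),
          ENNReal.ofReal (c ^ (p-1)) * volume {x | ENNReal.ofReal c < F x} := by
  have hS : MeasurableSet {z : ℝ × ℝ | ENNReal.ofReal z.1 < F z.2} := by
    exact measurableSet_lt (ENNReal.measurable_ofReal.comp measurable_fst) (hF.comp measurable_snd)
  set f2 : ℝ → ℝ → ℝ≥0∞ := fun c x => ENNReal.ofReal (c ^ (p-1)) *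
      Set.indicator {z : ℝ × ℝ | ENNReal.ofReal z.1 < F z.2} (fun _ => (1:ℝ≥0∞)) (c, x) with hf2
  have hmeas : AEMeasurable (Function.uncurry f2)
      ((volume.restrict (Set.Ioi (0:ℝ))).prod volume) := by
    apply Measurable.aemeasurable
    apply Measurable.mul
    · exact (ENNReal.measurable_ofReal.comp (measurable_fst.pow_const _))
    · exact (measurable_one.indicator hS)
  have hswap : ∫⁻ c in Set.Ioi (0:ℝ), ∫⁻ x, f2 c x
      = ∫⁻ x, ∫⁻ c in Set.Ioi (0:ℝ), f2 c x := lintegral_lintegral_swap hmeas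
  have h1 : ∀ c : ℝ, ENNReal.ofReal (c ^ (p-1)) * volume {x | ENNReal.ofReal c < F x}
      = ∫⁻ x, f2 c x := by
    intro c
    rw [← lintegral_indicator_one (measurableSet_lt measurable_const hF),
      ← lintegral_const_mul _ (measurable_one.indicator (measurableSet_lt measurable_const hF))]
    exact lintegral_congr fun x => by
      simp [hf2, Set.indicator_apply, Set.mem_setOf_eq]
  have h2 : ∀ x : ℝ, ∫⁻ c in Set.Ioi (0:ℝ), f2 c x = ENNReal.ofReal p⁻¹ * F x ^ p := by
    intro x
    rw [← scalar_main hp (F x)]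
    exact lintegral_congr fun c => by
      simp [hf2, Set.indicator_apply, Set.mem_setOf_eq]
  symm
  calc ENNReal.ofReal p * ∫⁻ c in Set.Ioi (0:ℝ),
        ENNReal.ofReal (c ^ (p-1)) * volume {x | ENNReal.ofReal c < F x}
      = ENNReal.ofReal p * ∫⁻ c in Set.Ioi (0:ℝ), ∫⁻ x, f2 c x := by
        rw [lintegral_congr h1]
    _ = ENNReal.ofReal p * ∫⁻ x, ∫⁻ c in Set.Ioi (0:ℝ), f2 c x := by rw [hswap]
    _ = ENNReal.ofReal p * ∫⁻ x, ENNReal.ofReal p⁻¹ * F x ^ p := by rw [lintegral_congr h2]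
    _ = ENNReal.ofReal p * (ENNReal.ofReal p⁻¹ * ∫⁻ x, F x ^ p) := by
        rw [lintegral_const_mul' _ _ ENNReal.ofReal_ne_top]
    _ = ∫⁻ x, F x ^ p := by
        rw [← mul_assoc, ← ENNReal.ofReal_mul hp.le, mul_inv_cancel₀ hp.ne', ENNReal.ofReal_one,
          one_mul]


lemma MB_le_add_const (f g : ℝ → ℝ≥0∞) (κ : ℝ≥0∞) (h : ∀ y, f y ≤ g y + κ) (x : ℝ) :
    MB f x ≤ MB g x + κ := by
  refine iSup_le fun a => iSup_le fun b => iSup_le fun hab => ?_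
  have hab' : (0:ℝ) < b - a := by linarith [hab.1, hab.2]
  set d := ENNReal.ofReal (b - a) with hd
  have hd0 : d ≠ 0 := by simp [hd, ENNReal.ofReal_eq_zero]; linarith
  have hdt : d ≠ ∞ := ENNReal.ofReal_ne_top
  calc d⁻¹ * ∫⁻ t in Set.Ioo a b, f t
      ≤ d⁻¹ * ∫⁻ t in Set.Ioo a b, (g t + κ) := by
        exact mul_le_mul_right (lintegral_mono fun t => h t) _
    _ = d⁻¹ * ((∫⁻ t in Set.Ioo a b, g t) + κ * d) := by
        rw [lintegral_add_right _ measurable_const, lintegral_const,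
          Measure.restrict_apply MeasurableSet.univ, Set.univ_inter, Real.volume_Ioo]
    _ = d⁻¹ * (∫⁻ t in Set.Ioo a b, g t) + κ * (d⁻¹ * d) := by
        rw [mul_add]; ring_nf
    _ ≤ MB g x + κ := by
        rw [ENNReal.inv_mul_cancel hd0 hdt, mul_one]
        exact add_le_add_left (avg_le_MB g hab.1 hab.2) _

lemma MB_strong (f : ℝ → ℝ≥0∞) (hf : Measurable f) {q : ℝ} (hq : 1 < q) :
    ∫⁻ x, (MB f x) ^ q ≤ ENNReal.ofReal (8 * q * 2 ^ q / (q - 1)) * ∫⁻ x, (f x) ^ q := by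
  have hq0 : (0:ℝ) < q := by linarith
  have hq1 : (0:ℝ) < q - 1 := by linarith
  set S2 : Set (ℝ × ℝ) := {z : ℝ × ℝ | ENNReal.ofReal (z.1/2) < f z.2} with hS2
  have hS2m : MeasurableSet S2 := by
    exact measurableSet_lt (ENNReal.measurable_ofReal.comp (measurable_fst.div_const 2))
      (hf.comp measurable_snd)
  set f3 : ℝ → ℝ → ℝ≥0∞ := fun c y =>
      ENNReal.ofReal (2 * c ^ (q-2)) * (f y * Set.indicator S2 (fun _ => 1) (c, y)) with hf3
  have hf3m : AEMeasurable (Function.uncurry f3)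
      ((volume.restrict (Set.Ioi (0:ℝ))).prod volume) := by
    apply Measurable.aemeasurable
    apply Measurable.mul
    · exact ENNReal.measurable_ofReal.comp ((measurable_fst.pow_const _).const_mul 2)
    · exact (hf.comp measurable_snd).mul (measurable_one.indicator hS2m)
  -- step (e): pointwise in c
  have step : ∀ c ∈ Set.Ioi (0:ℝ),
      ENNReal.ofReal (c ^ (q-1)) * volume {x | ENNReal.ofReal c < MB f x}
        ≤ 8 * ∫⁻ y, f3 c y := by
    intro c hc
    have hc' : (0:ℝ) < c := hc
    set h1 : ℝ → ℝ≥0∞ := fun y => f y * Set.indicator S2 (fun _ => 1) (c, y) with hh1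
    have hsub : ∀ y, f y ≤ h1 y + ENNReal.ofReal (c/2) := by
      intro y
      by_cases hy : ENNReal.ofReal (c/2) < f y
      · have : (c, y) ∈ S2 := hy
        rw [hh1]; simp only [Set.indicator_of_mem this, mul_one]
        exact le_self_add
      · exact le_add_left (not_lt.1 hy)
    have hincl : {x | ENNReal.ofReal c < MB f x} ⊆ {x | ENNReal.ofReal (c/2) < MB h1 x} := by
      intro x hx
      simp only [Set.mem_setOf_eq] at hx ⊢
      have h2 : ENNReal.ofReal (c/2) + ENNReal.ofReal (c/2) < MB h1 x + ENNReal.ofReal (c/2) := by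
        calc ENNReal.ofReal (c/2) + ENNReal.ofReal (c/2) = ENNReal.ofReal c := by
              rw [← ENNReal.ofReal_add (by linarith) (by linarith)]; norm_num
          _ < MB f x := hx
          _ ≤ MB h1 x + ENNReal.ofReal (c/2) := MB_le_add_const f h1 _ hsub x
      exact lt_of_add_lt_add_right h2
    have hwk : volume {x | ENNReal.ofReal (c/2) < MB h1 x}
        ≤ 8 * (ENNReal.ofReal (c/2))⁻¹ * ∫⁻ y, h1 y :=
      MB_weak h1 (by simp [ENNReal.ofReal_eq_zero]; linarith) ENNReal.ofReal_ne_top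
    calc ENNReal.ofReal (c ^ (q-1)) * volume {x | ENNReal.ofReal c < MB f x}
        ≤ ENNReal.ofReal (c ^ (q-1)) * (8 * (ENNReal.ofReal (c/2))⁻¹ * ∫⁻ y, h1 y) :=
          mul_le_mul_right ((measure_mono hincl).trans hwk) _
      _ = 8 * ∫⁻ y, f3 c y := by
          have hmeash1 : Measurable h1 :=
            hf.mul ((measurable_one.indicator hS2m).comp (measurable_const.prodMk measurable_id))
          have hid : c ^ (q-1) * (c/2)⁻¹ = 2 * c ^ (q-2) := by
            have h' : c ^ (q-2) = c ^ (q-1) / c := by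
              rw [show q - 2 = (q-1) - 1 by ring, Real.rpow_sub_one hc'.ne']
            rw [h']
            field_simp
          calc ENNReal.ofReal (c ^ (q-1)) * (8 * (ENNReal.ofReal (c/2))⁻¹ * ∫⁻ y, h1 y)
              = (8:ℝ≥0∞) * ((ENNReal.ofReal (c ^ (q-1)) * (ENNReal.ofReal (c/2))⁻¹)
                  * ∫⁻ y, h1 y) := by ring
            _ = 8 * (ENNReal.ofReal (2 * c ^ (q-2)) * ∫⁻ y, h1 y) := by
                rw [← ENNReal.ofReal_inv_of_pos (by linarith : (0:ℝ) < c/2),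
                  ← ENNReal.ofReal_mul (Real.rpow_nonneg hc'.le _), hid]
            _ = 8 * ∫⁻ y, f3 c y := by
                rw [← lintegral_const_mul _ hmeash1]
  -- inner integral in c, for fixed y
  have inner : ∀ y : ℝ, ∫⁻ c in Set.Ioi (0:ℝ), f3 c y
      = ENNReal.ofReal (2 ^ q / (q-1)) * (f y) ^ q := by
    intro y
    set T := f y with hT
    have hcongr : ∀ c ∈ Set.Ioi (0:ℝ), f3 c y
        = (2 * T) * (ENNReal.ofReal (c ^ ((q-1)-1)) *
            Set.indicator {c : ℝ | ENNReal.ofReal c < 2 * T} (fun _ => 1) c) := by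
      intro c hc
      have hc' : (0:ℝ) < c := hc
      have hiff : (c, y) ∈ S2 ↔ ENNReal.ofReal c < 2 * T := by
        rw [hS2]
        simp only [Set.mem_setOf_eq]
        constructor
        · intro h
          calc ENNReal.ofReal c = 2 * ENNReal.ofReal (c/2) := by
                rw [← ENNReal.ofReal_ofNat, ← ENNReal.ofReal_mul (by norm_num)]
                congr 1; ring
            _ < 2 * T := by
                exact (ENNReal.mul_lt_mul_iff_right (by norm_num) (by norm_num)).2 h
        · intro h
          have h2 : 2 * ENNReal.ofReal (c/2) < 2 * T := by
            calc 2 * ENNReal.ofReal (c/2) = ENNReal.ofReal c := by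
                  rw [← ENNReal.ofReal_ofNat, ← ENNReal.ofReal_mul (by norm_num)]
                  congr 1; ring
              _ < 2 * T := h
          exact (ENNReal.mul_lt_mul_iff_right (by norm_num) (by norm_num)).1 h2
      simp only [hf3]
      by_cases hmem : ENNReal.ofReal c < 2 * T
      · rw [Set.indicator_of_mem (hiff.2 hmem),
          Set.indicator_of_mem (show c ∈ {c : ℝ | ENNReal.ofReal c < 2 * T} from hmem)]
        simp only [mul_one]
        rw [show (q:ℝ) - 1 - 1 = q - 2 by ring,
          ENNReal.ofReal_mul (by norm_num : (0:ℝ) ≤ 2), ENNReal.ofReal_ofNat]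
        ring
      · rw [Set.indicator_of_notMem (fun hm => hmem (hiff.1 hm)),
          Set.indicator_of_notMem (show c ∉ {c : ℝ | ENNReal.ofReal c < 2 * T} from hmem)]
        simp
    rw [setLIntegral_congr_fun measurableSet_Ioi hcongr,
      lintegral_const_mul _ (by
        exact (ENNReal.measurable_ofReal.comp (measurable_id.pow_const _)).mul
          (measurable_one.indicator (measurableSet_lt ENNReal.measurable_ofReal measurable_const))),
      scalar_main hq1 (2 * T)]
    have h2q : (2:ℝ≥0∞) ^ (q-1) = ENNReal.ofReal (2 ^ (q-1)) := by
      rw [← ENNReal.ofReal_ofNat, ENNReal.ofReal_rpow_of_pos (by norm_num)]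
    have hTq : T * T ^ (q-1) = T ^ q := by
      rw [show T * T ^ (q-1) = T ^ (1:ℝ) * T ^ (q-1) by rw [ENNReal.rpow_one],
        ← ENNReal.rpow_add_of_nonneg _ _ (by norm_num) (by linarith)]
      norm_num
    calc 2 * T * (ENNReal.ofReal (q-1)⁻¹ * (2 * T) ^ (q-1))
        = 2 * T * (ENNReal.ofReal (q-1)⁻¹ * ((2:ℝ≥0∞) ^ (q-1) * T ^ (q-1))) := by
          rw [ENNReal.mul_rpow_of_nonneg _ _ (by linarith : (0:ℝ) ≤ q - 1)]
      _ = (2 * (2:ℝ≥0∞) ^ (q-1) * ENNReal.ofReal (q-1)⁻¹) * (T * T ^ (q-1)) := by ring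
      _ = ENNReal.ofReal (2 ^ q / (q-1)) * T ^ q := by
          rw [hTq, h2q, ← ENNReal.ofReal_ofNat, ← ENNReal.ofReal_mul (by norm_num),
            ← ENNReal.ofReal_mul (by positivity)]
          congr 2
          rw [show (2:ℝ) * 2 ^ (q-1) = 2 ^ (1:ℝ) * 2 ^ (q-1) by norm_num [Real.rpow_one],
            ← Real.rpow_add (by norm_num)]
          ring_nf
  calc ∫⁻ x, (MB f x) ^ q
      = ENNReal.ofReal q * ∫⁻ c in Set.Ioi (0:ℝ),
          ENNReal.ofReal (c ^ (q-1)) * volume {x | ENNReal.ofReal c < MB f x} :=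
        layercake (MB f) (MB_measurable f) hq0
    _ ≤ ENNReal.ofReal q * ∫⁻ c in Set.Ioi (0:ℝ), 8 * ∫⁻ y, f3 c y := by
        exact mul_le_mul_right (setLIntegral_mono' measurableSet_Ioi step) _
    _ = ENNReal.ofReal q * (8 * ∫⁻ c in Set.Ioi (0:ℝ), ∫⁻ y, f3 c y) := by
        rw [lintegral_const_mul' _ _ (by norm_num : (8:ℝ≥0∞) ≠ ∞)]
    _ = ENNReal.ofReal q * (8 * ∫⁻ y, ∫⁻ c in Set.Ioi (0:ℝ), f3 c y) := by
        rw [lintegral_lintegral_swap hf3m]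
    _ = ENNReal.ofReal q * (8 * (ENNReal.ofReal (2 ^ q / (q-1)) * ∫⁻ y, (f y) ^ q)) := by
        rw [lintegral_congr inner, lintegral_const_mul' _ _ ENNReal.ofReal_ne_top]
    _ = ENNReal.ofReal (8 * q * 2 ^ q / (q - 1)) * ∫⁻ x, (f x) ^ q := by
        rw [← mul_assoc, ← mul_assoc]
        congr 1
        rw [show (8:ℝ≥0∞) = ENNReal.ofReal 8 by norm_num,
          ← ENNReal.ofReal_mul (by positivity), ← ENNReal.ofReal_mul (by positivity)]
        congr 1
        ring

lemma geom_sum_bound : ∑' n : ℕ, ENNReal.ofReal ((n + 2) * Real.exp (-(n:ℝ))) ≤ 8 := by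
  have he : (0:ℝ) < Real.exp (-1) := Real.exp_pos _
  have hterm : ∀ n : ℕ, ENNReal.ofReal ((n + 2) * Real.exp (-(n:ℝ)))
      ≤ 2 * (ENNReal.ofReal (2 * Real.exp (-1))) ^ n := by
    intro n
    have h1 : Real.exp (-(n:ℝ)) = Real.exp (-1) ^ n := by
      rw [← Real.exp_nat_mul]; norm_num
    have h2 : ((n:ℝ) + 2) * Real.exp (-(n:ℝ)) ≤ 2 * (2 * Real.exp (-1)) ^ n := by
      rw [h1, mul_pow]
      have hn : ((n:ℝ) + 2) ≤ 2 * 2 ^ n := by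
        have := Nat.lt_two_pow_self (n := n)
        have : (n:ℝ) + 1 ≤ 2 ^ n := by exact_mod_cast this
        nlinarith
      nlinarith [pow_pos he n, pow_nonneg he.le n, pow_nonneg (by norm_num : (0:ℝ) ≤ 2) n]
    calc ENNReal.ofReal ((n + 2) * Real.exp (-(n:ℝ)))
        ≤ ENNReal.ofReal (2 * (2 * Real.exp (-1)) ^ n) := ENNReal.ofReal_le_ofReal h2
      _ = 2 * (ENNReal.ofReal (2 * Real.exp (-1))) ^ n := by
          rw [ENNReal.ofReal_mul (by norm_num), ENNReal.ofReal_pow (by positivity),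
            ENNReal.ofReal_ofNat]
  calc ∑' n : ℕ, ENNReal.ofReal ((n + 2) * Real.exp (-(n:ℝ)))
      ≤ ∑' n : ℕ, 2 * (ENNReal.ofReal (2 * Real.exp (-1))) ^ n := ENNReal.tsum_le_tsum hterm
    _ = 2 * (1 - ENNReal.ofReal (2 * Real.exp (-1)))⁻¹ := by
        rw [ENNReal.tsum_mul_left, ENNReal.tsum_geometric]
    _ ≤ 2 * 4 := by
        refine mul_le_mul_right ?_ _
        have h4 : (4:ℝ≥0∞)⁻¹ ≤ 1 - ENNReal.ofReal (2 * Real.exp (-1)) := by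
          have he9 := Real.exp_one_gt_d9
          have hev : Real.exp (-1) = (Real.exp 1)⁻¹ := by
            rw [← Real.exp_neg]
          have hle : 2 * Real.exp (-1) ≤ 3/4 := by
            rw [hev]
            nlinarith [mul_inv_cancel₀ (Real.exp_pos 1).ne', he9,
              inv_nonneg.2 (Real.exp_pos 1).le]
          have : (1:ℝ≥0∞) - ENNReal.ofReal (2 * Real.exp (-1))
              = ENNReal.ofReal (1 - 2 * Real.exp (-1)) := by
            rw [ENNReal.ofReal_sub _ (by positivity), ENNReal.ofReal_one]
          rw [this, show (4:ℝ≥0∞)⁻¹ = ENNReal.ofReal (4⁻¹) by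
            rw [← ENNReal.ofReal_ofNat 4, ← ENNReal.ofReal_inv_of_pos (by norm_num)]]
          exact ENNReal.ofReal_le_ofReal (by linarith)
        calc (1 - ENNReal.ofReal (2 * Real.exp (-1)))⁻¹ ≤ ((4:ℝ≥0∞)⁻¹)⁻¹ :=
              ENNReal.inv_le_inv' h4
          _ = 4 := inv_inv _
    _ = 8 := by norm_num

lemma dominated (g : ℤ → ℝ → ℝ) (hg : ∀ j, Measurable (g j))
    (G' : ℝ → ℝ≥0∞)
    (hG'def : G' = Set.indicator (Set.Ioi (0:ℝ)) (fun t => ⨆ j : ℤ, ENNReal.ofReal (g j t)))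
    (hG' : Measurable G') {s : ℝ} (hs : 0 < s) :
    (⨆ j : ℤ, ∫⁻ t in Set.Ioi s,
        ENNReal.ofReal ((4 : ℝ) ^ j * Real.exp (-(4 : ℝ) ^ j * (t - s)) * g j t))
      ≤ 8 * MB G' s := by
  refine iSup_le fun j => ?_
  set lam : ℝ := (4:ℝ) ^ j with hlam
  have hl : 0 < lam := by positivity
  have step1 : ∀ t ∈ Set.Ioi s,
      ENNReal.ofReal (lam * Real.exp (-lam * (t - s)) * g j t)
        ≤ ∑' n : ℕ, ENNReal.ofReal (lam * Real.exp (-(n:ℝ))) *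
            Set.indicator (Set.Ico (s + n/lam) (s + (n+1)/lam)) G' t := by
    intro t ht
    have hts : 0 < t - s := by simp only [Set.mem_Ioi] at ht; linarith
    set n : ℕ := ⌊lam * (t - s)⌋₊ with hn
    have hfl : (n:ℝ) ≤ lam * (t - s) := Nat.floor_le (by positivity)
    have hfl2 : lam * (t - s) < n + 1 := Nat.lt_floor_add_one _
    have hmem : t ∈ Set.Ico (s + n/lam) (s + (n+1)/lam) := by
      constructor
      · have h1 : (n:ℝ)/lam ≤ t - s := by rw [div_le_iff₀ hl]; nlinarith
        linarith
      · have : t - s < (n+1)/lam := by rw [lt_div_iff₀ hl]; nlinarith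
        linarith
    have hker : Real.exp (-lam * (t - s)) ≤ Real.exp (-(n:ℝ)) :=
      Real.exp_le_exp.2 (by nlinarith)
    have hGt : ENNReal.ofReal (g j t) ≤ G' t := by
      rw [hG'def, Set.indicator_of_mem (show t ∈ Set.Ioi (0:ℝ) by
        simp only [Set.mem_Ioi] at ht ⊢; linarith)]
      exact le_iSup (fun j' => ENNReal.ofReal (g j' t)) j
    have hbound : ENNReal.ofReal (lam * Real.exp (-lam * (t - s)) * g j t)
        ≤ ENNReal.ofReal (lam * Real.exp (-(n:ℝ))) *
            Set.indicator (Set.Ico (s + n/lam) (s + (n+1)/lam)) G' t := by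
      rw [Set.indicator_of_mem hmem]
      calc ENNReal.ofReal (lam * Real.exp (-lam * (t - s)) * g j t)
          ≤ ENNReal.ofReal (lam * Real.exp (-lam * (t - s))) * ENNReal.ofReal (g j t) := by
            rw [← ENNReal.ofReal_mul (by positivity)]
        _ ≤ ENNReal.ofReal (lam * Real.exp (-(n:ℝ))) * G' t := by
            exact mul_le_mul' (ENNReal.ofReal_le_ofReal (by nlinarith)) hGt
    exact hbound.trans (ENNReal.le_tsum n)
  calc ∫⁻ t in Set.Ioi s, ENNReal.ofReal (lam * Real.exp (-lam * (t - s)) * g j t)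
      ≤ ∫⁻ t in Set.Ioi s, ∑' n : ℕ, ENNReal.ofReal (lam * Real.exp (-(n:ℝ))) *
          Set.indicator (Set.Ico (s + n/lam) (s + (n+1)/lam)) G' t :=
        setLIntegral_mono' measurableSet_Ioi step1
    _ = ∑' n : ℕ, ∫⁻ t in Set.Ioi s, ENNReal.ofReal (lam * Real.exp (-(n:ℝ))) *
          Set.indicator (Set.Ico (s + n/lam) (s + (n+1)/lam)) G' t := by
        refine lintegral_tsum fun n => ?_
        exact ((hG'.indicator measurableSet_Ico).const_mul _).aemeasurable
    _ ≤ ∑' n : ℕ, ENNReal.ofReal ((n + 2) * Real.exp (-(n:ℝ))) * MB G' s := by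
        refine ENNReal.tsum_le_tsum fun n => ?_
        calc ∫⁻ t in Set.Ioi s, ENNReal.ofReal (lam * Real.exp (-(n:ℝ))) *
              Set.indicator (Set.Ico (s + n/lam) (s + (n+1)/lam)) G' t
            = ENNReal.ofReal (lam * Real.exp (-(n:ℝ))) *
              ∫⁻ t in Set.Ioi s, Set.indicator (Set.Ico (s + n/lam) (s + (n+1)/lam)) G' t := by
              rw [lintegral_const_mul' _ _ ENNReal.ofReal_ne_top]
          _ ≤ ENNReal.ofReal (lam * Real.exp (-(n:ℝ))) *
              (ENNReal.ofReal ((n + 2) / lam) * MB G' s) := by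
              refine mul_le_mul_right ?_ _
              calc ∫⁻ t in Set.Ioi s, Set.indicator (Set.Ico (s + n/lam) (s + (n+1)/lam)) G' t
                  ≤ ∫⁻ t, Set.indicator (Set.Ico (s + n/lam) (s + (n+1)/lam)) G' t :=
                    setLIntegral_le_lintegral _ _
                _ = ∫⁻ t in Set.Ico (s + n/lam) (s + (n+1)/lam), G' t :=
                    lintegral_indicator measurableSet_Ico G'
                _ ≤ ∫⁻ t in Set.Ioo (s - 1/lam) (s + (n+1)/lam), G' t := by
                    refine lintegral_mono_set fun t ht => ?_
                    simp only [Set.mem_Ico] at ht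
                    have h1 : (0:ℝ) ≤ (n:ℝ)/lam := by positivity
                    have h2 : (0:ℝ) < 1/lam := by positivity
                    exact ⟨by linarith, ht.2⟩
                _ ≤ ENNReal.ofReal ((s + (n+1)/lam) - (s - 1/lam)) * MB G' s := by
                    refine lintegral_Ioo_le_MB G' (by linarith [show (0:ℝ) < 1/lam by positivity])
                      (by linarith [show (0:ℝ) < ((n:ℝ)+1)/lam by positivity])
                _ = ENNReal.ofReal ((n + 2) / lam) * MB G' s := by
                    congr 2
                    field_simp
                    ring
          _ = ENNReal.ofReal ((n + 2) * Real.exp (-(n:ℝ))) * MB G' s := by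
              rw [← mul_assoc, ← ENNReal.ofReal_mul (by positivity)]
              congr 2
              field_simp
    _ = (∑' n : ℕ, ENNReal.ofReal ((n + 2) * Real.exp (-(n:ℝ)))) * MB G' s :=
        ENNReal.tsum_mul_right
    _ ≤ 8 * MB G' s := mul_le_mul_left geom_sum_bound _

end SupExpAux


/-- The one-dimensional Hardy–Littlewood maximal operator on `(0,∞)`:
`M f t = sup_{0 < a < t < b < ∞} (1/(b-a)) ∫_a^b |f(s)| ds`. -/
def hlMax1 (f : ℝ → ℝ) (t : ℝ) : ℝ≥0∞ :=
  ⨆ (a : ℝ) (b : ℝ) (_ : 0 < a ∧ a < t ∧ t < b),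
    (ENNReal.ofReal (b - a))⁻¹ * ∫⁻ s in Set.Ioo a b, ENNReal.ofReal |f s|

/-- For `1 < q < ∞` and non-negative measurable `g_j` on `(0,∞)`,
`‖sup_j ∫_s^∞ 4^j e^{-4^j (t-s)} g_j(t) dt‖_{L^q_s(0,∞)} ≤ C ‖sup_j g_j‖_{L^q(0,∞)}`. -/
theorem sup_exp_tail_Lq_bound (q : ℝ) (hq : 1 < q) :
    ∃ C : ℝ, 0 < C ∧ ∀ g : ℤ → ℝ → ℝ, (∀ j, Measurable (g j)) →
      (∀ j, ∀ t ∈ Set.Ioi (0 : ℝ), 0 ≤ g j t) →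
      (∫⁻ s in Set.Ioi (0 : ℝ),
          (⨆ j : ℤ, ∫⁻ t in Set.Ioi s,
            ENNReal.ofReal ((4 : ℝ) ^ j * Real.exp (-(4 : ℝ) ^ j * (t - s)) * g j t)) ^ q) ^ (1 / q)
        ≤ ENNReal.ofReal C *
          (∫⁻ s in Set.Ioi (0 : ℝ), (⨆ j : ℤ, ENNReal.ofReal (g j s)) ^ q) ^ (1 / q) := by
  have hq0 : (0:ℝ) < q := by linarith
  have hKq : (0:ℝ) < 8 * q * 2 ^ q / (q - 1) := by
    have : (0:ℝ) < (2:ℝ) ^ q := Real.rpow_pos_of_pos (by norm_num) _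
    have hq1 : (0:ℝ) < q - 1 := by linarith
    positivity
  refine ⟨8 * (8 * q * 2 ^ q / (q - 1)) ^ (1/q), by positivity, ?_⟩
  intro g hg hpos
  set G' : ℝ → ℝ≥0∞ :=
    Set.indicator (Set.Ioi (0:ℝ)) (fun t => ⨆ j : ℤ, ENNReal.ofReal (g j t)) with hG'def
  have hG' : Measurable G' := by
    refine Measurable.indicator ?_ measurableSet_Ioi
    exact Measurable.iSup fun j => (hg j).ennreal_ofReal
  have hGq : ∫⁻ x, G' x ^ q
      = ∫⁻ s in Set.Ioi (0 : ℝ), (⨆ j : ℤ, ENNReal.ofReal (g j s)) ^ q := by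
    rw [← lintegral_indicator measurableSet_Ioi]
    refine lintegral_congr fun x => ?_
    by_cases hx : x ∈ Set.Ioi (0:ℝ)
    · rw [hG'def, Set.indicator_of_mem hx, Set.indicator_of_mem hx]
    · rw [hG'def, Set.indicator_of_notMem hx, Set.indicator_of_notMem hx,
        ENNReal.zero_rpow_of_pos hq0]
  have hmain : (∫⁻ s in Set.Ioi (0 : ℝ),
      (⨆ j : ℤ, ∫⁻ t in Set.Ioi s,
        ENNReal.ofReal ((4 : ℝ) ^ j * Real.exp (-(4 : ℝ) ^ j * (t - s)) * g j t)) ^ q)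
      ≤ (8:ℝ≥0∞) ^ q * ENNReal.ofReal (8 * q * 2 ^ q / (q - 1)) *
        ∫⁻ s in Set.Ioi (0 : ℝ), (⨆ j : ℤ, ENNReal.ofReal (g j s)) ^ q := by
    calc ∫⁻ s in Set.Ioi (0 : ℝ),
        (⨆ j : ℤ, ∫⁻ t in Set.Ioi s,
          ENNReal.ofReal ((4 : ℝ) ^ j * Real.exp (-(4 : ℝ) ^ j * (t - s)) * g j t)) ^ q
        ≤ ∫⁻ s in Set.Ioi (0 : ℝ), (8 * SupExpAux.MB G' s) ^ q := by
          refine setLIntegral_mono' measurableSet_Ioi fun s hs => ?_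
          exact ENNReal.rpow_le_rpow
            (SupExpAux.dominated g hg G' hG'def hG' (Set.mem_Ioi.1 hs)) hq0.le
      _ ≤ ∫⁻ s, (8 * SupExpAux.MB G' s) ^ q := setLIntegral_le_lintegral _ _
      _ = (8:ℝ≥0∞) ^ q * ∫⁻ s, (SupExpAux.MB G' s) ^ q := by
          rw [← lintegral_const_mul' _ _
            (ENNReal.rpow_ne_top_of_nonneg hq0.le (by norm_num))]
          exact lintegral_congr fun s => ENNReal.mul_rpow_of_nonneg _ _ hq0.le
      _ ≤ (8:ℝ≥0∞) ^ q * (ENNReal.ofReal (8 * q * 2 ^ q / (q - 1)) * ∫⁻ x, G' x ^ q) :=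
          mul_le_mul_right (SupExpAux.MB_strong G' hG' hq) _
      _ = (8:ℝ≥0∞) ^ q * ENNReal.ofReal (8 * q * 2 ^ q / (q - 1)) *
          ∫⁻ s in Set.Ioi (0 : ℝ), (⨆ j : ℤ, ENNReal.ofReal (g j s)) ^ q := by
          rw [hGq, mul_assoc]
          ring
  calc (∫⁻ s in Set.Ioi (0 : ℝ),
      (⨆ j : ℤ, ∫⁻ t in Set.Ioi s,
        ENNReal.ofReal ((4 : ℝ) ^ j * Real.exp (-(4 : ℝ) ^ j * (t - s)) * g j t)) ^ q) ^ (1 / q)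
      ≤ ((8:ℝ≥0∞) ^ q * ENNReal.ofReal (8 * q * 2 ^ q / (q - 1)) *
          ∫⁻ s in Set.Ioi (0 : ℝ), (⨆ j : ℤ, ENNReal.ofReal (g j s)) ^ q) ^ (1 / q) :=
        ENNReal.rpow_le_rpow hmain (by positivity)
    _ = ((8:ℝ≥0∞) ^ q * ENNReal.ofReal (8 * q * 2 ^ q / (q - 1))) ^ (1/q) *
          (∫⁻ s in Set.Ioi (0 : ℝ), (⨆ j : ℤ, ENNReal.ofReal (g j s)) ^ q) ^ (1 / q) :=
        ENNReal.mul_rpow_of_nonneg _ _ (by positivity)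
    _ = ENNReal.ofReal (8 * (8 * q * 2 ^ q / (q - 1)) ^ (1/q)) *
          (∫⁻ s in Set.Ioi (0 : ℝ), (⨆ j : ℤ, ENNReal.ofReal (g j s)) ^ q) ^ (1 / q) := by
        congr 1
        rw [ENNReal.mul_rpow_of_nonneg _ _ (by positivity : (0:ℝ) ≤ 1/q)]
        rw [← ENNReal.rpow_mul, mul_one_div_cancel hq0.ne', ENNReal.rpow_one]
        rw [ENNReal.ofReal_rpow_of_pos hKq]
        rw [ENNReal.ofReal_mul (by norm_num : (0:ℝ) ≤ 8)]
        norm_num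

end
end

section
/- Let 1 < τ < ∞ and let α, β > 0 with α + β = 1. There is a constant C such that for every t > 0 and every sequence (a_j)_{j∈ℤ} of non-negative reals, ∑_{j∈ℤ} 4^j e^{−4^j t} a_j ≤ C t^{−β} ( ∑_{j∈ℤ} (4^{jα} e^{−4^{j−1} t} a_j)^τ )^{1/τ}. -/
open MeasureTheory Filter ENNReal

noncomputable section

private lemma aux_rpow_exp_le (γ : ℝ) (hγ : 0 ≤ γ) :
    ∃ C : ℝ, 1 ≤ C ∧ ∀ x : ℝ, 0 ≤ x → x ^ γ * Real.exp (-x) ≤ C := by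
  refine ⟨max 1 ((Nat.factorial ⌈γ⌉₊ : ℕ) : ℝ), le_max_left _ _, fun x hx => ?_⟩
  set n := ⌈γ⌉₊
  rcases le_total x 1 with hx1 | hx1
  · have h1 : x ^ γ ≤ 1 := Real.rpow_le_one hx hx1 hγ
    have h2 : Real.exp (-x) ≤ 1 := by
      rw [Real.exp_le_one_iff]; linarith
    have : x ^ γ * Real.exp (-x) ≤ 1 := by
      have := Real.rpow_nonneg hx γ
      nlinarith [Real.exp_pos (-x)]
    exact this.trans (le_max_left _ _)
  · have h1 : x ^ γ ≤ x ^ (n : ℝ) :=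
      Real.rpow_le_rpow_of_exponent_le hx1 (Nat.le_ceil γ)
    have h2 : x ^ (n : ℝ) = x ^ n := Real.rpow_natCast x n
    have h3 : x ^ n / (Nat.factorial n : ℝ) ≤ Real.exp x := by
      calc x ^ n / (Nat.factorial n : ℝ)
          ≤ ∑ i ∈ Finset.range (n + 1), x ^ i / (Nat.factorial i : ℝ) := by
            refine Finset.single_le_sum (f := fun i => x ^ i / (Nat.factorial i : ℝ)) ?_
              (Finset.self_mem_range_succ n)
            intro i _
            positivity
        _ ≤ Real.exp x := Real.sum_le_exp_of_nonneg (by linarith) _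
    have h4 : x ^ n * Real.exp (-x) ≤ (Nat.factorial n : ℝ) := by
      rw [Real.exp_neg]
      rw [div_le_iff₀ (by positivity)] at h3
      calc x ^ n * (Real.exp x)⁻¹
          ≤ (Real.exp x * (Nat.factorial n : ℝ)) * (Real.exp x)⁻¹ := by
            apply mul_le_mul_of_nonneg_right h3 (by positivity)
        _ = (Nat.factorial n : ℝ) := by field_simp
    calc x ^ γ * Real.exp (-x) ≤ x ^ n * Real.exp (-x) := by
          rw [← h2]; exact mul_le_mul_of_nonneg_right h1 (Real.exp_pos _).le
      _ ≤ ((Nat.factorial n : ℕ) : ℝ) := h4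
      _ ≤ max 1 ((Nat.factorial n : ℕ) : ℝ) := le_max_right _ _

private lemma aux_tsum_int_geom (R : ℝ≥0∞) (hR : R < 1) :
    ∑' k : ℤ, R ^ k.natAbs ≤ 2 * (1 - R)⁻¹ := by
  rw [tsum_of_nat_of_neg_add_one ENNReal.summable ENNReal.summable]
  have h1 : ∑' n : ℕ, R ^ (n : ℤ).natAbs = (1 - R)⁻¹ := by
    simp [ENNReal.tsum_geometric]
  have h2 : ∑' n : ℕ, R ^ (-((n : ℤ) + 1)).natAbs ≤ (1 - R)⁻¹ := by
    have : ∀ n : ℕ, R ^ (-((n : ℤ) + 1)).natAbs = R ^ (n + 1) := by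
      intro n
      congr 1
    rw [tsum_congr this]
    calc ∑' n : ℕ, R ^ (n + 1) ≤ ∑' n : ℕ, R ^ n :=
          ENNReal.tsum_le_tsum fun n => pow_le_pow_of_le_one zero_le hR.le (by omega)
      _ = (1 - R)⁻¹ := ENNReal.tsum_geometric R
  rw [h1, two_mul]
  exact add_le_add le_rfl h2

private lemma aux_core (γ C₂ : ℝ) (hγ : 0 < γ) (hC₂1 : 1 ≤ C₂)
    (hC₂ : ∀ x : ℝ, 0 ≤ x → x ^ (2*γ) * Real.exp (-x) ≤ C₂)
    (v : ℝ) (hv1 : 1/4 < v) (hv2 : v ≤ 1) (k : ℤ) :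
    v ^ γ * (4:ℝ) ^ ((k:ℝ) * γ) * Real.exp (-(4:ℝ) ^ ((k:ℝ)) * v)
      ≤ (C₂ * (4:ℝ) ^ (2*γ)) * ((4:ℝ) ^ (-γ)) ^ (k.natAbs) := by
  have hv0 : (0:ℝ) < v := by linarith
  have h4 : (0:ℝ) < 4 := by norm_num
  have hRHSexp : ((4:ℝ) ^ (-γ)) ^ (k.natAbs) = (4:ℝ) ^ (-γ * (k.natAbs : ℝ)) := by
    rw [← Real.rpow_natCast ((4:ℝ) ^ (-γ)) k.natAbs, ← Real.rpow_mul h4.le]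
  rcases le_or_gt k 0 with hk | hk
  · have habs : (k.natAbs : ℝ) = -(k : ℝ) := by
      rw [Nat.cast_natAbs, Int.cast_abs, abs_of_nonpos (by exact_mod_cast hk)]
    have h1 : v ^ γ ≤ 1 := Real.rpow_le_one hv0.le hv2 hγ.le
    have h2 : Real.exp (-(4:ℝ) ^ ((k:ℝ)) * v) ≤ 1 := by
      rw [Real.exp_le_one_iff]
      have := Real.rpow_pos_of_pos h4 (k:ℝ)
      nlinarith
    have hb : (0:ℝ) < (4:ℝ) ^ ((k:ℝ) * γ) := Real.rpow_pos_of_pos h4 _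
    have hD : (1:ℝ) ≤ C₂ * (4:ℝ) ^ (2*γ) := by
      have : (1:ℝ) ≤ (4:ℝ) ^ (2*γ) := Real.one_le_rpow (by norm_num) (by positivity)
      nlinarith
    rw [hRHSexp, habs]
    have : -γ * -(k:ℝ) = (k:ℝ) * γ := by ring
    rw [this]
    nlinarith [Real.exp_pos (-(4:ℝ) ^ ((k:ℝ)) * v), Real.rpow_nonneg hv0.le γ,
      mul_pos hb (Real.exp_pos (-(4:ℝ) ^ ((k:ℝ)) * v))]
  · have habs : (k.natAbs : ℝ) = (k : ℝ) := by
      rw [Nat.cast_natAbs, Int.cast_abs, abs_of_pos (by exact_mod_cast hk)]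
    set x : ℝ := (4:ℝ) ^ ((k:ℝ)) * v with hxdef
    have hx0 : 0 < x := mul_pos (Real.rpow_pos_of_pos h4 _) hv0
    have hLHS : v ^ γ * (4:ℝ) ^ ((k:ℝ) * γ) * Real.exp (-x) = x ^ γ * Real.exp (-x) := by
      rw [hxdef, Real.mul_rpow (Real.rpow_nonneg h4.le _) hv0.le, Real.rpow_mul h4.le]
      ring
    have hsplit : x ^ γ * Real.exp (-x) ≤ C₂ * x ^ (-γ) := by
      have h2γ : x ^ (2*γ) = x ^ γ * x ^ γ := by
        rw [two_mul, Real.rpow_add hx0]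
      have := hC₂ x hx0.le
      rw [h2γ] at this
      have hxγ : 0 < x ^ γ := Real.rpow_pos_of_pos hx0 γ
      have hxnγ : x ^ (-γ) = (x ^ γ)⁻¹ := by
        rw [Real.rpow_neg hx0.le]
      rw [hxnγ]
      rw [mul_comm (x^γ) (x^γ), mul_assoc] at this
      calc x ^ γ * Real.exp (-x) ≤ C₂ / x ^ γ := by
            rw [le_div_iff₀ hxγ]
            nlinarith
        _ = C₂ * (x ^ γ)⁻¹ := by ring
    have hxlow : (4:ℝ) ^ ((k:ℝ) - 1) ≤ x := by
      rw [Real.rpow_sub h4, Real.rpow_one]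
      rw [hxdef]
      have hb : 0 < (4:ℝ) ^ ((k:ℝ)) := Real.rpow_pos_of_pos h4 _
      rw [div_le_iff₀ (by norm_num : (0:ℝ) < 4)]
      nlinarith
    have hmono : x ^ (-γ) ≤ ((4:ℝ) ^ ((k:ℝ) - 1)) ^ (-γ) := by
      apply Real.rpow_le_rpow_of_nonpos (Real.rpow_pos_of_pos h4 _) hxlow (by linarith)
    have heq : ((4:ℝ) ^ ((k:ℝ) - 1)) ^ (-γ) = (4:ℝ) ^ γ * (4:ℝ) ^ (-γ * (k:ℝ)) := by
      rw [← Real.rpow_mul h4.le, ← Real.rpow_add h4]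
      congr 1
      ring
    have h4γ : (4:ℝ) ^ γ ≤ (4:ℝ) ^ (2*γ) :=
      Real.rpow_le_rpow_of_exponent_le (by norm_num) (by linarith)
    have hnegeq : -(4:ℝ) ^ ((k:ℝ)) * v = -x := by rw [hxdef]; ring
    rw [hRHSexp, habs, hnegeq, hLHS]
    have hpos : (0:ℝ) < (4:ℝ) ^ (-γ * (k:ℝ)) := Real.rpow_pos_of_pos h4 _
    calc x ^ γ * Real.exp (-x) ≤ C₂ * x ^ (-γ) := hsplit
      _ ≤ C₂ * ((4:ℝ) ^ γ * (4:ℝ) ^ (-γ * (k:ℝ))) := by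
          exact mul_le_mul_of_nonneg_left (heq ▸ hmono) (by linarith)
      _ = C₂ * (4:ℝ) ^ γ * (4:ℝ) ^ (-γ * (k:ℝ)) := by ring
      _ ≤ C₂ * (4:ℝ) ^ (2*γ) * (4:ℝ) ^ (-γ * (k:ℝ)) := by
          refine mul_le_mul_of_nonneg_right ?_ hpos.le
          exact mul_le_mul_of_nonneg_left h4γ (by linarith)

private lemma aux_dyadic_sum (γ : ℝ) (hγ : 0 < γ) :
    ∃ K : ℝ, 0 < K ∧ ∀ u : ℝ, 0 < u →
      ∑' j : ℤ, ENNReal.ofReal ((4:ℝ) ^ ((j:ℝ) * γ) * Real.exp (-(4:ℝ) ^ j * u))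
        ≤ ENNReal.ofReal K * ENNReal.ofReal (u ^ (-γ)) := by
  obtain ⟨C₂, hC₂1, hC₂⟩ := aux_rpow_exp_le (2*γ) (by linarith)
  have h4 : (0:ℝ) < 4 := by norm_num
  set r : ℝ := (4:ℝ) ^ (-γ) with hrdef
  have hr0 : 0 < r := Real.rpow_pos_of_pos h4 _
  have hr1 : r < 1 := Real.rpow_lt_one_of_one_lt_of_neg (by norm_num) (by linarith)
  have h1r : 0 < 1 - r := by linarith
  set D : ℝ := C₂ * (4:ℝ) ^ (2*γ) with hDdef
  have hD0 : 0 < D := by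
    have : (0:ℝ) < (4:ℝ) ^ (2*γ) := Real.rpow_pos_of_pos h4 _
    nlinarith
  refine ⟨D * (2 * (1 - r)⁻¹), by positivity, fun u hu => ?_⟩
  -- rescaling index
  set c : ℤ := ⌈Real.logb 4 u⌉ with hcdef
  set n : ℤ := -c with hndef
  have h4c : (0:ℝ) < (4:ℝ) ^ ((c:ℝ)) := Real.rpow_pos_of_pos h4 _
  have huc : u ≤ (4:ℝ) ^ ((c:ℝ)) := by
    calc u = (4:ℝ) ^ (Real.logb 4 u) := (Real.rpow_logb h4 (by norm_num) hu).symm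
      _ ≤ (4:ℝ) ^ ((c:ℝ)) :=
          Real.rpow_le_rpow_of_exponent_le (by norm_num) (Int.le_ceil _)
  have hclt : (4:ℝ) ^ ((c:ℝ)) < 4 * u := by
    calc (4:ℝ) ^ ((c:ℝ)) < (4:ℝ) ^ (Real.logb 4 u + 1) := by
          apply Real.rpow_lt_rpow_of_exponent_lt (by norm_num)
          exact_mod_cast Int.ceil_lt_add_one (Real.logb 4 u)
      _ = 4 * u := by
          rw [Real.rpow_add h4, Real.rpow_logb h4 (by norm_num) hu, Real.rpow_one]
          ring
  set v : ℝ := (4:ℝ) ^ ((n:ℝ)) * u with hvdef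
  have h4n : (4:ℝ) ^ ((n:ℝ)) = ((4:ℝ) ^ ((c:ℝ)))⁻¹ := by
    rw [hndef]
    push_cast
    rw [Real.rpow_neg h4.le]
  have hv0 : 0 < v := mul_pos (Real.rpow_pos_of_pos h4 _) hu
  have hvle : v ≤ 1 := by
    rw [hvdef, h4n]
    rw [inv_mul_le_iff₀ h4c, mul_one]
    exact huc
  have hvgt : 1/4 < v := by
    rw [hvdef, h4n]
    rw [lt_inv_mul_iff₀ h4c]
    linarith
  -- reindex the sum
  have hre := Equiv.tsum_eq (Equiv.addRight n)
    (fun j : ℤ => ENNReal.ofReal ((4:ℝ) ^ ((j:ℝ) * γ) * Real.exp (-(4:ℝ) ^ j * u)))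
  rw [← hre]
  -- termwise bound
  have hterm : ∀ k : ℤ,
      ENNReal.ofReal ((4:ℝ) ^ (((k + n : ℤ):ℝ) * γ) * Real.exp (-(4:ℝ) ^ (k + n) * u))
        ≤ ENNReal.ofReal (D * u ^ (-γ)) * (ENNReal.ofReal r) ^ (k.natAbs) := by
    intro k
    have hz : ((4:ℝ) ^ (k + n : ℤ)) = (4:ℝ) ^ ((k:ℝ)) * (4:ℝ) ^ ((n:ℝ)) := by
      rw [← Real.rpow_intCast (4:ℝ) (k + n)]
      push_cast
      rw [Real.rpow_add h4]
    have hexparg : -(4:ℝ) ^ (k + n : ℤ) * u = -(4:ℝ) ^ ((k:ℝ)) * v := by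
      rw [hz, hvdef]; ring
    have hpow : (4:ℝ) ^ (((k + n : ℤ):ℝ) * γ)
        = (4:ℝ) ^ ((k:ℝ) * γ) * (v ^ γ * u ^ (-γ)) := by
      have hnγ : (4:ℝ) ^ (((n:ℤ):ℝ) * γ) = v ^ γ * u ^ (-γ) := by
        have h4nv : (4:ℝ) ^ ((n:ℝ)) = v / u := by
          rw [hvdef]; field_simp
        rw [Real.rpow_mul h4.le, h4nv, Real.div_rpow hv0.le hu.le,
          Real.rpow_neg hu.le]
        ring
      rw [← hnγ, ← Real.rpow_add h4]
      congr 1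
      push_cast
      ring
    rw [hexparg, hpow]
    have hcore := aux_core γ C₂ hγ hC₂1 hC₂ v hvgt hvle k
    have hreal : (4:ℝ) ^ ((k:ℝ) * γ) * (v ^ γ * u ^ (-γ)) * Real.exp (-(4:ℝ) ^ ((k:ℝ)) * v)
        ≤ (D * u ^ (-γ)) * r ^ (k.natAbs) := by
      have hu' : 0 ≤ u ^ (-γ) := Real.rpow_nonneg hu.le _
      calc (4:ℝ) ^ ((k:ℝ) * γ) * (v ^ γ * u ^ (-γ)) * Real.exp (-(4:ℝ) ^ ((k:ℝ)) * v)
          = (v ^ γ * (4:ℝ) ^ ((k:ℝ) * γ) * Real.exp (-(4:ℝ) ^ ((k:ℝ)) * v)) * u ^ (-γ) := by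
            ring
        _ ≤ (D * r ^ (k.natAbs)) * u ^ (-γ) := by
            exact mul_le_mul_of_nonneg_right hcore hu'
        _ = (D * u ^ (-γ)) * r ^ (k.natAbs) := by ring
    calc ENNReal.ofReal _ ≤ ENNReal.ofReal ((D * u ^ (-γ)) * r ^ (k.natAbs)) :=
          ENNReal.ofReal_le_ofReal hreal
      _ = ENNReal.ofReal (D * u ^ (-γ)) * ENNReal.ofReal (r ^ (k.natAbs)) := by
          rw [ENNReal.ofReal_mul (by positivity)]
      _ = ENNReal.ofReal (D * u ^ (-γ)) * (ENNReal.ofReal r) ^ (k.natAbs) := by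
          rw [ENNReal.ofReal_pow hr0.le]
  calc (∑' k : ℤ, ENNReal.ofReal ((4:ℝ) ^ ((((Equiv.addRight n) k : ℤ):ℝ) * γ)
          * Real.exp (-(4:ℝ) ^ ((Equiv.addRight n) k : ℤ) * u)))
      ≤ ∑' k : ℤ, ENNReal.ofReal (D * u ^ (-γ)) * (ENNReal.ofReal r) ^ (k.natAbs) :=
        ENNReal.tsum_le_tsum fun k => hterm k
    _ = ENNReal.ofReal (D * u ^ (-γ)) * ∑' k : ℤ, (ENNReal.ofReal r) ^ (k.natAbs) :=
        ENNReal.tsum_mul_left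
    _ ≤ ENNReal.ofReal (D * u ^ (-γ)) * (2 * (1 - ENNReal.ofReal r)⁻¹) := by
        refine mul_le_mul_right (aux_tsum_int_geom _ ?_) _
        exact ENNReal.ofReal_lt_one.mpr hr1
    _ = ENNReal.ofReal (D * (2 * (1 - r)⁻¹)) * ENNReal.ofReal (u ^ (-γ)) := by
        have e1 : (1 : ℝ≥0∞) - ENNReal.ofReal r = ENNReal.ofReal (1 - r) := by
          rw [ENNReal.ofReal_sub _ hr0.le, ENNReal.ofReal_one]
        rw [e1, ← ENNReal.ofReal_inv_of_pos h1r]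
        rw [← ENNReal.ofReal_ofNat 2, ← ENNReal.ofReal_mul (by norm_num)]
        rw [← ENNReal.ofReal_mul (by positivity), ← ENNReal.ofReal_mul (by positivity)]
        congr 1
        ring

/-- For `1 < τ < ∞` and `α, β > 0` with `α + β = 1`, there is `C` such that for
all `t > 0` and non-negative reals `(a_j)_{j ∈ ℤ}`,
`∑_j 4^j e^{-4^j t} a_j ≤ C t^{-β} (∑_j (4^{jα} e^{-4^{j-1} t} a_j)^τ)^{1/τ}`. -/
theorem holder_dyadic_exp_sum (τ α β : ℝ) (hτ : 1 < τ)
    (hα : 0 < α) (hβ : 0 < β) (hαβ : α + β = 1) :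
    ∃ C : ℝ, 0 < C ∧ ∀ t : ℝ, 0 < t → ∀ a : ℤ → ℝ, (∀ j, 0 ≤ a j) →
      ∑' j : ℤ, ENNReal.ofReal ((4 : ℝ) ^ j * Real.exp (-(4 : ℝ) ^ j * t) * a j)
        ≤ ENNReal.ofReal C * ENNReal.ofReal (t ^ (-β)) *
          (∑' j : ℤ,
            ENNReal.ofReal ((4 : ℝ) ^ ((j : ℝ) * α) *
              Real.exp (-(4 : ℝ) ^ (j - 1) * t) * a j) ^ τ) ^ (1 / τ) := by
  have h4 : (0:ℝ) < 4 := by norm_num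
  set q : ℝ := Real.conjExponent τ with hqdef
  have hpq : τ.HolderConjugate q := Real.HolderConjugate.conjExponent hτ
  have hq1 : 1 < q := hpq.symm.lt
  have hq0 : 0 < q := by linarith
  obtain ⟨K, hK0, hK⟩ := aux_dyadic_sum (β * q) (by positivity)
  refine ⟨K ^ (1/q) * ((3/4) * q) ^ (-β),
    mul_pos (Real.rpow_pos_of_pos hK0 _) (Real.rpow_pos_of_pos (by linarith) _),
    fun t ht a ha => ?_⟩
  set f : ℤ → ℝ≥0∞ := fun j => ENNReal.ofReal ((4 : ℝ) ^ ((j : ℝ) * α) *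
    Real.exp (-(4 : ℝ) ^ (j - 1) * t) * a j) with hfdef
  set g : ℤ → ℝ≥0∞ := fun j => ENNReal.ofReal ((4 : ℝ) ^ ((j : ℝ) * β) *
    Real.exp (-((3/4) * (4 : ℝ) ^ j) * t)) with hgdef
  -- factorization
  have hfact : ∀ j : ℤ, ENNReal.ofReal ((4 : ℝ) ^ j * Real.exp (-(4 : ℝ) ^ j * t) * a j)
      = f j * g j := by
    intro j
    rw [hfdef, hgdef, ← ENNReal.ofReal_mul (mul_nonneg (by positivity) (ha j))]
    congr 1
    have e1 : (4:ℝ) ^ ((j:ℝ) * α) * (4:ℝ) ^ ((j:ℝ) * β) = (4:ℝ) ^ (j : ℤ) := by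
      rw [← Real.rpow_add h4, ← Real.rpow_intCast (4:ℝ) j]
      congr 1
      calc (j:ℝ) * α + (j:ℝ) * β = (j:ℝ) * (α + β) := by ring
        _ = (j:ℝ) := by rw [hαβ]; ring
    have e2 : (4:ℝ) ^ (j - 1 : ℤ) = (4:ℝ) ^ (j:ℤ) * (4:ℝ)⁻¹ := by
      rw [zpow_sub₀ (by norm_num : (4:ℝ) ≠ 0), zpow_one]
      ring
    have e3 : Real.exp (-(4:ℝ) ^ (j - 1 : ℤ) * t) * Real.exp (-((3/4) * (4:ℝ) ^ (j:ℤ)) * t)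
        = Real.exp (-(4:ℝ) ^ (j:ℤ) * t) := by
      rw [← Real.exp_add, e2]
      congr 1
      ring
    symm
    calc (4:ℝ) ^ ((j:ℝ) * α) * Real.exp (-(4:ℝ) ^ (j - 1 : ℤ) * t) * a j *
          ((4:ℝ) ^ ((j:ℝ) * β) * Real.exp (-((3/4) * (4:ℝ) ^ (j:ℤ)) * t))
        = ((4:ℝ) ^ ((j:ℝ) * α) * (4:ℝ) ^ ((j:ℝ) * β)) *
          (Real.exp (-(4:ℝ) ^ (j - 1 : ℤ) * t) * Real.exp (-((3/4) * (4:ℝ) ^ (j:ℤ)) * t)) *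
          a j := by ring
      _ = (4:ℝ) ^ (j:ℤ) * Real.exp (-(4:ℝ) ^ (j:ℤ) * t) * a j := by rw [e1, e3]
  -- Hölder via counting measure
  have hHolder : ∑' j : ℤ, f j * g j
      ≤ (∑' j : ℤ, f j ^ τ) ^ (1/τ) * (∑' j : ℤ, g j ^ q) ^ (1/q) := by
    have h := ENNReal.lintegral_mul_le_Lp_mul_Lq (Measure.count : Measure ℤ) hpq
      (measurable_of_countable f).aemeasurable (measurable_of_countable g).aemeasurable
    simpa [MeasureTheory.lintegral_count] using h
  -- bound the q-factor
  set u : ℝ := (3/4) * q * t with hudef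
  have hu0 : 0 < u := by positivity
  have hgq : ∀ j : ℤ, g j ^ q
      = ENNReal.ofReal ((4:ℝ) ^ ((j:ℝ) * (β * q)) * Real.exp (-(4:ℝ) ^ (j:ℤ) * u)) := by
    intro j
    simp only [hgdef]
    rw [ENNReal.ofReal_rpow_of_nonneg (by positivity) hq0.le]
    congr 1
    rw [Real.mul_rpow (Real.rpow_nonneg h4.le _) (Real.exp_pos _).le]
    have ea : ((4:ℝ) ^ ((j:ℝ) * β)) ^ q = (4:ℝ) ^ ((j:ℝ) * (β * q)) := by
      rw [← Real.rpow_mul h4.le]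
      congr 1
      ring
    have eb : (Real.exp (-((3/4) * (4:ℝ) ^ (j:ℤ)) * t)) ^ q
        = Real.exp (-(4:ℝ) ^ (j:ℤ) * u) := by
      rw [← Real.exp_mul]
      congr 1
      rw [hudef]
      ring
    rw [ea, eb]
  have hqsum : ∑' j : ℤ, g j ^ q ≤ ENNReal.ofReal K * ENNReal.ofReal (u ^ (-(β * q))) := by
    rw [tsum_congr hgq]
    exact hK u hu0
  have hqfactor : (∑' j : ℤ, g j ^ q) ^ (1/q)
      ≤ ENNReal.ofReal (K ^ (1/q) * ((3/4) * q) ^ (-β)) * ENNReal.ofReal (t ^ (-β)) := by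
    calc (∑' j : ℤ, g j ^ q) ^ (1/q)
        ≤ (ENNReal.ofReal K * ENNReal.ofReal (u ^ (-(β * q)))) ^ (1/q) :=
          ENNReal.rpow_le_rpow hqsum (by positivity)
      _ = ENNReal.ofReal (K ^ (1/q)) * ENNReal.ofReal ((u ^ (-(β * q))) ^ (1/q)) := by
          rw [ENNReal.mul_rpow_of_nonneg _ _ (by positivity : (0:ℝ) ≤ 1/q),
            ENNReal.ofReal_rpow_of_pos hK0,
            ENNReal.ofReal_rpow_of_nonneg (Real.rpow_nonneg hu0.le _) (by positivity)]
      _ = ENNReal.ofReal (K ^ (1/q)) * ENNReal.ofReal (((3/4) * q) ^ (-β) * t ^ (-β)) := by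
          congr 2
          rw [← Real.rpow_mul hu0.le]
          have : -(β * q) * (1/q) = -β := by field_simp
          rw [this, hudef, Real.mul_rpow (by positivity) ht.le]
      _ = ENNReal.ofReal (K ^ (1/q) * ((3/4) * q) ^ (-β)) * ENNReal.ofReal (t ^ (-β)) := by
          rw [ENNReal.ofReal_mul (by positivity), ENNReal.ofReal_mul (by positivity)]
          ring
  calc ∑' j : ℤ, ENNReal.ofReal ((4 : ℝ) ^ (j:ℤ) * Real.exp (-(4 : ℝ) ^ (j:ℤ) * t) * a j)
      = ∑' j : ℤ, f j * g j := tsum_congr hfact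
    _ ≤ (∑' j : ℤ, f j ^ τ) ^ (1/τ) * (∑' j : ℤ, g j ^ q) ^ (1/q) := hHolder
    _ ≤ (∑' j : ℤ, f j ^ τ) ^ (1/τ) *
        (ENNReal.ofReal (K ^ (1/q) * ((3/4) * q) ^ (-β)) * ENNReal.ofReal (t ^ (-β))) :=
          mul_le_mul_right hqfactor _
    _ = ENNReal.ofReal (K ^ (1/q) * ((3/4) * q) ^ (-β)) * ENNReal.ofReal (t ^ (-β)) *
        (∑' j : ℤ, f j ^ τ) ^ (1/τ) := by ring

end
end
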